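/- For every n ≥ 1, the set of all step matrices with nonzero entries {1,…,n} (taken over all matrix sizes q×p) is in bijective correspondence with the symmetric group S_n; in particular, there are exactly n! such step matrices. -/

import Mathlib

/-- A `q × p` step matrix with nonzero entries `{1,…,n}`: entries lie in `{0,1,…,n}`;
each element of `{1,…,n}` appears exactly once; in each row (resp. column) the nonzero
entries occupy consecutive positions and increase from left to right (resp. top to
bottom); and each diagonal parallel to the main diagonal contains exactly one nonzero
entry. (Rows and columns are indexed by `Fin q` and `Fin p`; the diagonal through
position `(i,j)` is determined by `j - i`.) -/
def IsStepMatrix (n q p : ℕ) (E : Fin q → Fin p → ℕ) : Prop :=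
  (∀ i j, E i j ≤ n) ∧
  (∀ k : ℕ, 1 ≤ k → k ≤ n → ∃! ij : Fin q × Fin p, E ij.1 ij.2 = k) ∧
  (∀ (i : Fin q) (j₁ j₂ j₃ : Fin p), j₁ ≤ j₂ → j₂ ≤ j₃ →
    E i j₁ ≠ 0 → E i j₃ ≠ 0 → E i j₂ ≠ 0) ∧
  (∀ (i : Fin q) (j₁ j₂ : Fin p), j₁ < j₂ →
    E i j₁ ≠ 0 → E i j₂ ≠ 0 → E i j₁ < E i j₂) ∧
  (∀ (j : Fin p) (i₁ i₂ i₃ : Fin q), i₁ ≤ i₂ → i₂ ≤ i₃ →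
    E i₁ j ≠ 0 → E i₃ j ≠ 0 → E i₂ j ≠ 0) ∧
  (∀ (j : Fin p) (i₁ i₂ : Fin q), i₁ < i₂ →
    E i₁ j ≠ 0 → E i₂ j ≠ 0 → E i₁ j < E i₂ j) ∧
  (∀ c : ℤ, 1 - (q : ℤ) ≤ c → c ≤ (p : ℤ) - 1 →
    ∃! ij : Fin q × Fin p, ((ij.2 : ℤ) - (ij.1 : ℤ) = c ∧ E ij.1 ij.2 ≠ 0))

/-- The type of all step matrices with nonzero entries `{1,…,n}`, over all matrix
sizes `q × p` with `q, p ≥ 1`. -/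
structure StepMatrix (n : ℕ) where
  q : ℕ
  p : ℕ
  hq : 1 ≤ q
  hp : 1 ≤ p
  E : Fin q → Fin p → ℕ
  isStep : IsStepMatrix n q p E

namespace SMAux


def desB (σ : ℕ → ℕ) (m : ℕ) : ℕ := ((Finset.range m).filter fun t => σ (t+1) < σ t).card

lemma desB_zero (σ : ℕ → ℕ) : desB σ 0 = 0 := rfl

lemma desB_succ (σ : ℕ → ℕ) (m : ℕ) :
    desB σ (m+1) = desB σ m + (if σ (m+1) < σ m then 1 else 0) := by
  unfold desB
  rw [Finset.range_add_one, Finset.filter_insert]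
  split
  · rw [Finset.card_insert_of_notMem (by simp)]
  · simp

lemma desB_mono (σ : ℕ → ℕ) : Monotone (desB σ) := by
  intro a b hab
  unfold desB
  exact Finset.card_le_card (Finset.filter_subset_filter _ (by simpa using hab))

lemma desB_le (σ : ℕ → ℕ) (m : ℕ) : desB σ m ≤ m := by
  calc desB σ m ≤ (Finset.range m).card := Finset.card_filter_le _ _
  _ = m := Finset.card_range m

lemma desB_sub_le (σ : ℕ → ℕ) {a b : ℕ} (h : a ≤ b) : desB σ b ≤ desB σ a + (b - a) := by
  induction b with
  | zero => simpa using (Nat.le_zero.mp h) ▸ le_refl _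
  | succ b ih =>
    rcases Nat.lt_or_ge a (b+1) with h' | h'
    · have := ih (by omega)
      rw [desB_succ]
      split <;> omega
    · have : a = b + 1 := le_antisymm h h'
      subst this; simp

lemma chain_lt (σ : ℕ → ℕ) {a b : ℕ} (hab : a < b)
    (h : ∀ t, a ≤ t → t < b → σ t < σ (t+1)) : σ a < σ b := by
  induction b with
  | zero => omega
  | succ b ih =>
    rcases Nat.lt_or_ge a b with h' | h'
    · exact lt_trans (ih h' (fun t ht ht' => h t ht (by omega))) (h b (by omega) (by omega))
    · have : a = b := by omega
      subst this; exact h a le_rfl (by omega)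

lemma chain_gt (σ : ℕ → ℕ) {a b : ℕ} (hab : a < b)
    (h : ∀ t, a ≤ t → t < b → σ (t+1) < σ t) : σ b < σ a := by
  induction b with
  | zero => omega
  | succ b ih =>
    rcases Nat.lt_or_ge a b with h' | h'
    · exact lt_trans (h b (by omega) (by omega)) (ih h' (fun t ht ht' => h t ht (by omega)))
    · have : a = b := by omega
      subst this; exact h a le_rfl (by omega)

/-- discrete IVT for a non-increasing-by-1 walk -/
lemma ivt_down (f : ℕ → ℕ) (m r : ℕ)
    (h : ∀ k, k < m → f (k+1) ≤ f k ∧ f k ≤ f (k+1) + 1)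
    (h1 : f m ≤ r) (h2 : r ≤ f 0) : ∃ k, k ≤ m ∧ f k = r := by
  induction m with
  | zero => exact ⟨0, le_rfl, by omega⟩
  | succ m ih =>
    rcases Nat.lt_or_ge r (f m) with h' | h'
    · have := h m (by omega)
      exact ⟨m+1, le_rfl, by omega⟩
    · obtain ⟨k, hk, hfk⟩ := ih (fun k hk => h k (by omega)) h'
      exact ⟨k, by omega, hfk⟩

/-- discrete IVT for a non-decreasing-by-1 walk -/
lemma ivt_up (f : ℕ → ℕ) (m r : ℕ)
    (h : ∀ k, k < m → f k ≤ f (k+1) ∧ f (k+1) ≤ f k + 1)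
    (h1 : f 0 ≤ r) (h2 : r ≤ f m) : ∃ k, k ≤ m ∧ f k = r := by
  induction m with
  | zero => exact ⟨0, le_rfl, by omega⟩
  | succ m ih =>
    rcases Nat.lt_or_ge (f m) r with h' | h'
    · have := h m (by omega)
      exact ⟨m+1, le_rfl, by omega⟩
    · obtain ⟨k, hk, hfk⟩ := ih (fun k hk => h k (by omega)) h'
      exact ⟨k, by omega, hfk⟩


variable {n : ℕ} (M : StepMatrix n)

noncomputable def pos (m : ℕ) : Fin M.q × Fin M.p :=
  if h : m + 2 ≤ M.q + M.p then
    (M.isStep.2.2.2.2.2.2 ((m:ℤ) - ((M.q:ℤ) - 1)) (by omega) (by omega)).choose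
  else ⟨⟨0, M.hq⟩, ⟨0, M.hp⟩⟩

lemma pos_spec {m : ℕ} (h : m + 2 ≤ M.q + M.p) :
    (((pos M m).2 : ℤ) - ((pos M m).1 : ℤ) = (m:ℤ) - ((M.q:ℤ) - 1)) ∧
      M.E (pos M m).1 (pos M m).2 ≠ 0 := by
  rw [pos, dif_pos h]
  exact (M.isStep.2.2.2.2.2.2 ((m:ℤ) - ((M.q:ℤ) - 1)) (by omega) (by omega)).choose_spec.1

lemma pos_unique {m : ℕ} (h : m + 2 ≤ M.q + M.p) (ij : Fin M.q × Fin M.p)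
    (hd : ((ij.2 : ℤ) - (ij.1 : ℤ) = (m:ℤ) - ((M.q:ℤ) - 1))) (hne : M.E ij.1 ij.2 ≠ 0) :
    ij = pos M m := by
  rw [pos, dif_pos h]
  exact (M.isStep.2.2.2.2.2.2 ((m:ℤ) - ((M.q:ℤ) - 1)) (by omega) (by omega)).choose_spec.2
    ij ⟨hd, hne⟩

noncomputable def wval (m : ℕ) : ℕ := M.E (pos M m).1 (pos M m).2

lemma wval_ne {m : ℕ} (h : m + 2 ≤ M.q + M.p) : wval M m ≠ 0 := (pos_spec M h).2

lemma wval_le (m : ℕ) : wval M m ≤ n := M.isStep.1 _ _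

lemma wval_inj {m₁ m₂ : ℕ} (h₁ : m₁ + 2 ≤ M.q + M.p) (h₂ : m₂ + 2 ≤ M.q + M.p)
    (h : wval M m₁ = wval M m₂) : m₁ = m₂ := by
  have hv1 := wval_ne M h₁
  have hvle := wval_le M m₁
  have hu := M.isStep.2.1 (wval M m₁) (by omega) hvle
  have e1 : pos M m₁ = hu.choose := hu.choose_spec.2 _ rfl
  have e2 : pos M m₂ = hu.choose := hu.choose_spec.2 _ h.symm
  have := (pos_spec M h₁).1
  have h2' := (pos_spec M h₂).1
  rw [e1, ← e2] at this
  omega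

noncomputable def kcell (k : ℕ) (h1 : 1 ≤ k) (h2 : k ≤ n) : Fin M.q × Fin M.p :=
  (M.isStep.2.1 k h1 h2).choose

lemma kcell_spec (k : ℕ) (h1 : 1 ≤ k) (h2 : k ≤ n) :
    M.E (kcell M k h1 h2).1 (kcell M k h1 h2).2 = k :=
  (M.isStep.2.1 k h1 h2).choose_spec.1

lemma kcell_unique (k : ℕ) (h1 : 1 ≤ k) (h2 : k ≤ n) (ij : Fin M.q × Fin M.p)
    (h : M.E ij.1 ij.2 = k) : ij = kcell M k h1 h2 :=
  (M.isStep.2.1 k h1 h2).choose_spec.2 ij h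

lemma qp_card : M.q + M.p = n + 1 := by
  classical
  have e1 : Fin n ≃ {ij : Fin M.q × Fin M.p // M.E ij.1 ij.2 ≠ 0} :=
    { toFun := fun k => ⟨kcell M (k.val+1) (by omega) (by omega), by
        have := kcell_spec M (k.val+1) (by omega) (by omega); omega⟩
      invFun := fun s => ⟨M.E s.val.1 s.val.2 - 1, by
        have := M.isStep.1 s.val.1 s.val.2
        have := s.2
        omega⟩
      left_inv := by
        intro k
        have := kcell_spec M (k.val+1) (by omega) (by omega)
        exact Fin.ext (by simp only []; omega)
      right_inv := by
        rintro ⟨ij, hij⟩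
        have hle := M.isStep.1 ij.1 ij.2
        apply Subtype.ext
        show kcell M (M.E ij.1 ij.2 - 1 + 1) (by omega) (by omega) = ij
        exact (kcell_unique M _ (by omega) (by omega) ij (by omega)).symm }
  have e2 : Fin (M.q + M.p - 1) ≃ {ij : Fin M.q × Fin M.p // M.E ij.1 ij.2 ≠ 0} :=
    { toFun := fun m => ⟨pos M m.val, (pos_spec M (by omega)).2⟩
      invFun := fun s => ⟨s.val.2.val + (M.q - 1 - s.val.1.val), by
        have := s.val.1.isLt; have := s.val.2.isLt; have := M.hq; omega⟩
      left_inv := by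
        intro m
        have s1 := (pos_spec M (m := m.val) (by omega)).1
        have h1 := (pos M m.val).1.isLt
        exact Fin.ext (by simp only []; omega)
      right_inv := by
        rintro ⟨ij, hij⟩
        have hi := ij.1.isLt
        have hj := ij.2.isLt
        have hq := M.hq
        apply Subtype.ext
        show pos M (ij.2.val + (M.q - 1 - ij.1.val)) = ij
        exact (pos_unique M (by omega) ij (by push_cast; omega) hij).symm }
  have := Fintype.card_congr (e1.trans e2.symm)
  simp only [Fintype.card_fin] at this
  have hq := M.hq
  have hp := M.hp
  omega


lemma pos_zero : (pos M 0).1.val = M.q - 1 ∧ (pos M 0).2.val = 0 := by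
  have hq := M.hq
  have hp := M.hp
  have hd := (pos_spec M (m := 0) (by omega)).1
  have h1 := (pos M 0).1.isLt
  have h2 := (pos M 0).2.isLt
  omega

lemma pos_last : (pos M (M.q + M.p - 2)).1.val = 0 ∧
    (pos M (M.q + M.p - 2)).2.val = M.p - 1 := by
  have hq := M.hq
  have hp := M.hp
  have hd := (pos_spec M (m := M.q + M.p - 2) (by omega)).1
  have h1 := (pos M (M.q + M.p - 2)).1.isLt
  have h2 := (pos M (M.q + M.p - 2)).2.isLt
  omega

lemma pos_step (m : ℕ) (h : m + 3 ≤ M.q + M.p) :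
    ((pos M (m+1)).1.val = (pos M m).1.val ∧ (pos M (m+1)).2.val = (pos M m).2.val + 1) ∨
    ((pos M (m+1)).1.val + 1 = (pos M m).1.val ∧ (pos M (m+1)).2.val = (pos M m).2.val) := by
  induction m using Nat.strong_induction_on with
  | _ m IH =>
  have hq := M.hq
  have hp := M.hp
  have d1 := (pos_spec M (m := m) (by omega)).1
  have d2 := (pos_spec M (m := m+1) (by omega)).1
  have ne1 := (pos_spec M (m := m) (by omega)).2
  have ne2 := (pos_spec M (m := m+1) (by omega)).2
  have hi := (pos M m).1.isLt
  have hj := (pos M m).2.isLt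
  have hi' := (pos M (m+1)).1.isLt
  have hj' := (pos M (m+1)).2.isLt
  have hz := pos_zero M
  have hwalkr : ∀ k, k < m → (pos M (k+1)).1.val ≤ (pos M k).1.val ∧
      (pos M k).1.val ≤ (pos M (k+1)).1.val + 1 := by
    intro k hk
    rcases IH k hk (by omega) with ⟨h1, h2⟩ | ⟨h1, h2⟩ <;> omega
  have hwalkc : ∀ k, k < m → (pos M k).2.val ≤ (pos M (k+1)).2.val ∧
      (pos M (k+1)).2.val ≤ (pos M k).2.val + 1 := by
    intro k hk
    rcases IH k hk (by omega) with ⟨h1, h2⟩ | ⟨h1, h2⟩ <;> omega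
  rcases Nat.lt_trichotomy (pos M (m+1)).1.val (pos M m).1.val with hlt | heq | hgt
  · rcases Nat.eq_or_lt_of_le hlt with hone | htwo
    · right; omega
    · -- i' + 2 ≤ i : contradiction via column j' visited earlier
      exfalso
      have hjj : (pos M (m+1)).2.val + 1 ≤ (pos M m).2.val := by omega
      obtain ⟨k, hk, hck⟩ := ivt_up (fun k => (pos M k).2.val) m ((pos M (m+1)).2.val)
        (fun k hk => hwalkc k hk)
        (by show (pos M 0).2.val ≤ _; omega) (by show _ ≤ (pos M m).2.val; omega)
      have hckf : (pos M k).2 = (pos M (m+1)).2 := Fin.ext hck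
      have dk := (pos_spec M (m := k) (by omega)).1
      have nek := (pos_spec M (m := k) (by omega)).2
      rw [hckf] at dk nek
      have hrk : (pos M (m+1)).1.val + 1 ≤ (pos M k).1.val := by omega
      set rfin : Fin M.q := ⟨(pos M (m+1)).1.val + 1, by omega⟩ with hrfin
      have hEr : M.E rfin (pos M (m+1)).2 ≠ 0 := by
        refine M.isStep.2.2.2.2.1 (pos M (m+1)).2 (pos M (m+1)).1 rfin (pos M k).1
          ?_ ?_ ne2 nek
        · simp only [Fin.le_def, hrfin]; omega
        · simp only [Fin.le_def, hrfin]; omega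
      have := pos_unique M (m := m) (by omega) (rfin, (pos M (m+1)).2)
        (by simp only [hrfin]; push_cast; omega) hEr
      have : ((rfin, (pos M (m+1)).2) : Fin M.q × Fin M.p).2.val = (pos M m).2.val := by
        rw [this]
      simp at this
      omega
  · left; omega
  · -- i' > i : contradiction via row i' visited earlier
    exfalso
    obtain ⟨k, hk, hrk⟩ := ivt_down (fun k => (pos M k).1.val) m ((pos M (m+1)).1.val)
      (fun k hk => hwalkr k hk)
      (by show (pos M m).1.val ≤ _; omega) (by show _ ≤ (pos M 0).1.val; omega)
    have hrkf : (pos M k).1 = (pos M (m+1)).1 := Fin.ext hrk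
    have dk := (pos_spec M (m := k) (by omega)).1
    have nek := (pos_spec M (m := k) (by omega)).2
    rw [hrkf] at dk nek
    have hck : (pos M k).2.val + 1 ≤ (pos M (m+1)).2.val := by omega
    set cfin : Fin M.p := ⟨(pos M (m+1)).2.val - 1, by omega⟩ with hcfin
    have hEc : M.E (pos M (m+1)).1 cfin ≠ 0 := by
      refine M.isStep.2.2.1 (pos M (m+1)).1 (pos M k).2 cfin (pos M (m+1)).2
        ?_ ?_ nek ne2
      · simp only [Fin.le_def, hcfin]; omega
      · simp only [Fin.le_def, hcfin]; omega
    have := pos_unique M (m := m) (by omega) ((pos M (m+1)).1, cfin)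
      (by simp only [hcfin]; push_cast; omega) hEc
    have : (((pos M (m+1)).1, cfin) : Fin M.q × Fin M.p).1.val = (pos M m).1.val := by
      rw [this]
    simp at this
    omega

lemma pos_step' (m : ℕ) (h : m + 3 ≤ M.q + M.p) :
    ((pos M (m+1)).1.val = (pos M m).1.val ∧ (pos M (m+1)).2.val = (pos M m).2.val + 1 ∧
      wval M m < wval M (m+1)) ∨
    ((pos M (m+1)).1.val + 1 = (pos M m).1.val ∧ (pos M (m+1)).2.val = (pos M m).2.val ∧
      wval M (m+1) < wval M m) := by
  have ne1 := (pos_spec M (m := m) (by omega)).2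
  have ne2 := (pos_spec M (m := m+1) (by omega)).2
  rcases pos_step M m h with ⟨h1, h2⟩ | ⟨h1, h2⟩
  · left
    refine ⟨h1, h2, ?_⟩
    have hif : (pos M (m+1)).1 = (pos M m).1 := Fin.ext h1
    unfold wval
    rw [hif] at ne2 ⊢
    exact M.isStep.2.2.2.1 (pos M m).1 (pos M m).2 (pos M (m+1)).2
      (by rw [Fin.lt_def]; omega) ne1 ne2
  · right
    refine ⟨h1, h2, ?_⟩
    have hjf : (pos M (m+1)).2 = (pos M m).2 := Fin.ext h2
    unfold wval
    rw [hjf] at ne2 ⊢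
    exact M.isStep.2.2.2.2.2.1 (pos M m).2 (pos M (m+1)).1 (pos M m).1
      (by rw [Fin.lt_def]; omega) ne2 ne1

lemma pos_row_formula (m : ℕ) (h : m + 2 ≤ M.q + M.p) :
    (pos M m).1.val + desB (wval M) m = M.q - 1 := by
  induction m with
  | zero => rw [desB_zero]; exact (pos_zero M).1 ▸ rfl
  | succ m ih =>
    have ih' := ih (by omega)
    rw [desB_succ]
    rcases pos_step' M m (by omega) with ⟨h1, h2, h3⟩ | ⟨h1, h2, h3⟩
    · rw [if_neg (by omega)]; omega
    · rw [if_pos h3]; omega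

lemma desB_last : desB (wval M) (M.q + M.p - 2) = M.q - 1 := by
  have h1 := pos_row_formula M (M.q + M.p - 2) (by have := M.hq; have := M.hp; omega)
  have h2 := (pos_last M).1
  omega


/-! ### Building a step matrix from a word -/

def gD (n : ℕ) (σ : ℕ → ℕ) : ℕ := desB σ (n-1)

def gq (n : ℕ) (σ : ℕ → ℕ) : ℕ := gD n σ + 1

def gp (n : ℕ) (σ : ℕ → ℕ) : ℕ := n - gD n σ

def gE (n : ℕ) (σ : ℕ → ℕ) : Fin (gq n σ) → Fin (gp n σ) → ℕ := fun i j =>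
  if desB σ (j.val + gD n σ - i.val) + i.val = gD n σ then σ (j.val + gD n σ - i.val) else 0

section GSide

variable (n : ℕ) (σ : ℕ → ℕ)

lemma gD_le : gD n σ ≤ n - 1 := desB_le σ (n-1)

lemma gstep_asc {t : ℕ} (hinj : ∀ t₁ t₂, t₁ < n → t₂ < n → σ t₁ = σ t₂ → t₁ = t₂)
    (ht : t + 1 < n) (h : desB σ (t+1) = desB σ t) : σ t < σ (t+1) := by
  have hs := desB_succ σ t
  rw [h] at hs
  by_cases hlt : σ (t+1) < σ t
  · rw [if_pos hlt] at hs; omega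
  · rcases Nat.lt_or_ge (σ t) (σ (t+1)) with h' | h'
    · exact h'
    · have : σ t = σ (t+1) := by omega
      have := hinj t (t+1) (by omega) ht this
      omega

lemma gstep_desc {t : ℕ} (h : desB σ (t+1) = desB σ t + 1) :
    σ (t+1) < σ t := by
  have hs := desB_succ σ t
  by_cases hlt : σ (t+1) < σ t
  · exact hlt
  · rw [if_neg hlt] at hs; omega

lemma desB_eq_between {a b t : ℕ} (hab : a ≤ t) (htb : t ≤ b)
    (h : desB σ a = desB σ b) : desB σ t = desB σ a := by
  have h1 := desB_mono σ hab
  have h2 := desB_mono σ htb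
  omega

lemma mIdx_lt (hn : 1 ≤ n) (i : Fin (gq n σ)) (j : Fin (gp n σ)) :
    j.val + gD n σ - i.val ≤ n - 1 := by
  have hD := gD_le n σ
  have hi : i.val < gD n σ + 1 := i.isLt
  have hj : j.val < n - gD n σ := j.isLt
  omega

lemma gE_ne_iff (hn : 1 ≤ n) (hσ : ∀ t, t < n → 1 ≤ σ t ∧ σ t ≤ n)
    (i : Fin (gq n σ)) (j : Fin (gp n σ)) :
    gE n σ i j ≠ 0 ↔ desB σ (j.val + gD n σ - i.val) + i.val = gD n σ := by
  have hm := mIdx_lt n σ hn i j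
  unfold gE
  split
  · have := (hσ (j.val + gD n σ - i.val) (by omega)).1
    constructor
    · intro _ ; assumption
    · intro _ ; omega
  · constructor
    · intro h; exact absurd rfl h
    · intro h; exact absurd h (by assumption)

lemma gE_val (i : Fin (gq n σ)) (j : Fin (gp n σ))
    (h : desB σ (j.val + gD n σ - i.val) + i.val = gD n σ) :
    gE n σ i j = σ (j.val + gD n σ - i.val) := by
  unfold gE; rw [if_pos h]

lemma gIsStep (hn : 1 ≤ n) (hσ : ∀ t, t < n → 1 ≤ σ t ∧ σ t ≤ n)
    (hinj : ∀ t₁ t₂, t₁ < n → t₂ < n → σ t₁ = σ t₂ → t₁ = t₂)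
    (hsurj : ∀ k, 1 ≤ k → k ≤ n → ∃ t, t < n ∧ σ t = k) :
    IsStepMatrix n (gq n σ) (gp n σ) (gE n σ) := by
  have hD := gD_le n σ
  have hgq : gq n σ = gD n σ + 1 := rfl
  have hgp : gp n σ = n - gD n σ := rfl
  refine ⟨?_, ?_, ?_, ?_, ?_, ?_, ?_⟩
  · -- entries ≤ n
    intro i j
    have hm := mIdx_lt n σ hn i j
    unfold gE
    split
    · exact (hσ _ (by omega)).2
    · omega
  · -- each value exactly once
    intro k hk1 hkn
    obtain ⟨t, htn, hσt⟩ := hsurj k hk1 hkn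
    have hdt : desB σ t ≤ gD n σ := desB_mono σ (by omega)
    have hdt' : desB σ t ≤ t := desB_le σ t
    have hg4 : gD n σ ≤ desB σ t + (n - 1 - t) := desB_sub_le σ (by omega)
    refine ⟨(⟨gD n σ - desB σ t, by omega⟩, ⟨t - desB σ t, by omega⟩), ?_, ?_⟩
    · show gE n σ _ _ = k
      have hm : (t - desB σ t) + gD n σ - (gD n σ - desB σ t) = t := by omega
      unfold gE
      simp only [hm]
      rw [if_pos (by omega)]
      exact hσt
    · rintro ⟨i, j⟩ hij
      dsimp only at hij
      have hm := mIdx_lt n σ hn i j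
      have hcond : desB σ (j.val + gD n σ - i.val) + i.val = gD n σ := by
        by_contra hc
        unfold gE at hij
        rw [if_neg hc] at hij
        omega
      have hval : σ (j.val + gD n σ - i.val) = k := by
        unfold gE at hij; rwa [if_pos hcond] at hij
      have hmt : j.val + gD n σ - i.val = t :=
        hinj (j.val + gD n σ - i.val) t (by omega) htn (hval.trans hσt.symm)
      rw [hmt] at hcond
      have hi : i.val < gD n σ + 1 := i.isLt
      have hj : j.val < n - gD n σ := j.isLt
      refine Prod.ext (Fin.ext ?_) (Fin.ext ?_) <;> dsimp only <;> omega
  · -- rows: consecutive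
    intro i j₁ j₂ j₃ h12 h23 h1 h3
    rw [Fin.le_def] at h12 h23
    rw [gE_ne_iff n σ hn hσ] at h1 h3 ⊢
    have e1 := desB_mono σ (show j₁.val + gD n σ - i.val ≤ j₂.val + gD n σ - i.val by omega)
    have e2 := desB_mono σ (show j₂.val + gD n σ - i.val ≤ j₃.val + gD n σ - i.val by omega)
    omega
  · -- rows: increasing
    intro i j₁ j₂ h12 h1 h2
    rw [Fin.lt_def] at h12
    rw [gE_ne_iff n σ hn hσ] at h1 h2
    have hi : i.val < gD n σ + 1 := i.isLt
    have hm1 := mIdx_lt n σ hn i j₁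
    have hm2 := mIdx_lt n σ hn i j₂
    rw [gE_val n σ i j₁ h1, gE_val n σ i j₂ h2]
    refine chain_lt σ (by omega) ?_
    intro t ht1 ht2
    refine gstep_asc n σ hinj (by omega) ?_
    have ha := desB_eq_between σ (a := j₁.val + gD n σ - i.val) (b := j₂.val + gD n σ - i.val)
      (t := t) (by omega) (by omega) (by omega)
    have hb := desB_eq_between σ (a := j₁.val + gD n σ - i.val) (b := j₂.val + gD n σ - i.val)
      (t := t+1) (by omega) (by omega) (by omega)
    omega
  · -- columns: consecutive
    intro j i₁ i₂ i₃ h12 h23 h1 h3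
    rw [Fin.le_def] at h12 h23
    rw [gE_ne_iff n σ hn hσ] at h1 h3 ⊢
    have hi3 : i₃.val < gD n σ + 1 := i₃.isLt
    have e1 := desB_mono σ (show j.val + gD n σ - i₂.val ≤ j.val + gD n σ - i₁.val by omega)
    have e2 := desB_mono σ (show j.val + gD n σ - i₃.val ≤ j.val + gD n σ - i₂.val by omega)
    have s1 := desB_sub_le σ (show j.val + gD n σ - i₂.val ≤ j.val + gD n σ - i₁.val by omega)
    have s2 := desB_sub_le σ (show j.val + gD n σ - i₃.val ≤ j.val + gD n σ - i₂.val by omega)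
    omega
  · -- columns: increasing
    intro j i₁ i₂ h12 h1 h2
    rw [Fin.lt_def] at h12
    rw [gE_ne_iff n σ hn hσ] at h1 h2
    have hi2 : i₂.val < gD n σ + 1 := i₂.isLt
    have hm1 := mIdx_lt n σ hn i₁ j
    have hm2 := mIdx_lt n σ hn i₂ j
    rw [gE_val n σ i₁ j h1, gE_val n σ i₂ j h2]
    refine chain_gt σ (a := j.val + gD n σ - i₂.val) (b := j.val + gD n σ - i₁.val)
      (by omega) ?_
    intro t ht1 ht2
    refine gstep_desc σ ?_
    have e1 := desB_mono σ (show t ≤ t + 1 by omega)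
    have hstep := desB_sub_le σ (show t ≤ t + 1 by omega)
    have s1 := desB_sub_le σ (show j.val + gD n σ - i₂.val ≤ t by omega)
    have s2 := desB_sub_le σ (show t + 1 ≤ j.val + gD n σ - i₁.val by omega)
    have e2 := desB_mono σ (show j.val + gD n σ - i₂.val ≤ t by omega)
    have e3 := desB_mono σ (show t + 1 ≤ j.val + gD n σ - i₁.val by omega)
    omega
  · -- diagonals
    intro c hc1 hc2
    push_cast [hgq, hgp] at hc1 hc2
    set m : ℕ := (c + gD n σ).toNat with hmdef
    have hmc : (m : ℤ) = c + gD n σ := Int.toNat_of_nonneg (by omega)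
    have hmn : m ≤ n - 1 := by omega
    have hdm : desB σ m ≤ gD n σ := desB_mono σ (by omega)
    have hdm' : desB σ m ≤ m := desB_le σ m
    have hg4 : gD n σ ≤ desB σ m + (n - 1 - m) := desB_sub_le σ (by omega)
    refine ⟨(⟨gD n σ - desB σ m, by omega⟩, ⟨m - desB σ m, by omega⟩), ⟨?_, ?_⟩, ?_⟩
    · push_cast
      omega
    · rw [gE_ne_iff n σ hn hσ]
      dsimp only
      have : (m - desB σ m) + gD n σ - (gD n σ - desB σ m) = m := by omega
      rw [this]
      omega
    · rintro ⟨i, j⟩ ⟨hd, hne⟩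
      dsimp only at hd hne
      rw [gE_ne_iff n σ hn hσ] at hne
      have hi : i.val < gD n σ + 1 := i.isLt
      have hj : j.val < n - gD n σ := j.isLt
      have hmij : j.val + gD n σ - i.val = m := by omega
      rw [hmij] at hne
      refine Prod.ext (Fin.ext ?_) (Fin.ext ?_) <;> dsimp only <;> omega

end GSide

/-! ### The permutation word and the two maps -/

def permσ (n : ℕ) (w : Equiv.Perm (Fin n)) : ℕ → ℕ :=
  fun t => if h : t < n then (w ⟨t, h⟩).val + 1 else 0

lemma permσ_bounds (n : ℕ) (w : Equiv.Perm (Fin n)) :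
    ∀ t, t < n → 1 ≤ permσ n w t ∧ permσ n w t ≤ n := by
  intro t ht
  rw [permσ, dif_pos ht]
  have := (w ⟨t, ht⟩).isLt
  omega

lemma permσ_inj (n : ℕ) (w : Equiv.Perm (Fin n)) :
    ∀ t₁ t₂, t₁ < n → t₂ < n → permσ n w t₁ = permσ n w t₂ → t₁ = t₂ := by
  intro t₁ t₂ h1 h2 heq
  unfold permσ at heq
  rw [dif_pos h1, dif_pos h2] at heq
  have : w ⟨t₁, h1⟩ = w ⟨t₂, h2⟩ := Fin.ext (by omega)
  have := w.injective this
  exact congrArg Fin.val this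

lemma permσ_surj (n : ℕ) (w : Equiv.Perm (Fin n)) :
    ∀ k, 1 ≤ k → k ≤ n → ∃ t, t < n ∧ permσ n w t = k := by
  intro k hk1 hkn
  refine ⟨(w.symm ⟨k - 1, by omega⟩).val, (w.symm ⟨k - 1, by omega⟩).isLt, ?_⟩
  rw [permσ, dif_pos (w.symm ⟨k - 1, by omega⟩).isLt]
  have : (⟨(w.symm ⟨k - 1, by omega⟩).val, (w.symm ⟨k - 1, by omega⟩).isLt⟩ : Fin n) =
      w.symm ⟨k - 1, by omega⟩ := rfl
  rw [this, Equiv.apply_symm_apply]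
  show k - 1 + 1 = k
  omega

noncomputable def Gperm (n : ℕ) (hn : 1 ≤ n) (w : Equiv.Perm (Fin n)) : StepMatrix n where
  q := gq n (permσ n w)
  p := gp n (permσ n w)
  hq := Nat.succ_le_succ (Nat.zero_le _)
  hp := by
    have := gD_le n (permσ n w)
    show 1 ≤ n - gD n (permσ n w)
    omega
  E := gE n (permσ n w)
  isStep := gIsStep n (permσ n w) hn (permσ_bounds n w) (permσ_inj n w) (permσ_surj n w)

lemma Gperm_wval (n : ℕ) (hn : 1 ≤ n) (w : Equiv.Perm (Fin n)) (m : ℕ) (hm : m < n) :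
    wval (Gperm n hn w) m = permσ n w m := by
  have hD := gD_le n (permσ n w)
  have hdm : desB (permσ n w) m ≤ gD n (permσ n w) := desB_mono _ (by omega)
  have hdm' : desB (permσ n w) m ≤ m := desB_le _ m
  have hg4 : gD n (permσ n w) ≤ desB (permσ n w) m + (n - 1 - m) := desB_sub_le _ (by omega)
  have hqp : (Gperm n hn w).q + (Gperm n hn w).p = n + 1 := qp_card _
  have hqr : (Gperm n hn w).q = gD n (permσ n w) + 1 := rfl
  have hpr : (Gperm n hn w).p = n - gD n (permσ n w) := rfl
  set i₀ : Fin (Gperm n hn w).q := ⟨gD n (permσ n w) - desB (permσ n w) m, by omega⟩ with hi₀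
  set j₀ : Fin (Gperm n hn w).p := ⟨m - desB (permσ n w) m, by omega⟩ with hj₀
  have hmIdx : j₀.val + gD n (permσ n w) - i₀.val = m := by
    simp only [hi₀, hj₀]
    omega
  have hne : (Gperm n hn w).E i₀ j₀ ≠ 0 := by
    show gE n (permσ n w) i₀ j₀ ≠ 0
    refine (gE_ne_iff n (permσ n w) hn (permσ_bounds n w) i₀ j₀).mpr ?_
    rw [hmIdx]
    simp only [hi₀]
    omega
  have hcell := pos_unique (Gperm n hn w) (m := m) (by omega) (i₀, j₀)
    (by simp only [hi₀, hj₀, hqr]; push_cast; omega) hne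
  rw [wval, ← hcell]
  show gE n (permσ n w) i₀ j₀ = _
  rw [gE_val n (permσ n w) i₀ j₀ ?hc, hmIdx]
  case hc =>
    rw [hmIdx]
    simp only [hi₀]
    omega

noncomputable def Fperm {n : ℕ} (M : StepMatrix n) : Equiv.Perm (Fin n) :=
  Equiv.ofBijective (fun m => (⟨wval M m.val - 1, by
      have hqp := qp_card M
      have h1 := wval_ne M (m := m.val) (by omega)
      have h2 := wval_le M m.val
      omega⟩ : Fin n))
    (Finite.injective_iff_bijective.mp (by
      intro a b hab
      have hqp := qp_card M
      have h1 := wval_ne M (m := a.val) (by omega)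
      have h2 := wval_ne M (m := b.val) (by omega)
      have h3 : wval M a.val - 1 = wval M b.val - 1 := congrArg Fin.val hab
      exact Fin.ext (wval_inj M (by omega) (by omega) (by omega))))

lemma Fperm_val {n : ℕ} (M : StepMatrix n) (m : Fin n) :
    (Fperm M m).val = wval M m.val - 1 := rfl

lemma FGperm (n : ℕ) (hn : 1 ≤ n) (w : Equiv.Perm (Fin n)) : Fperm (Gperm n hn w) = w := by
  apply Equiv.ext
  intro m
  apply Fin.ext
  rw [Fperm_val, Gperm_wval n hn w m.val m.isLt, permσ, dif_pos m.isLt]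
  simp

lemma desB_congr {σ τ : ℕ → ℕ} {m : ℕ} (h : ∀ t, t ≤ m → σ t = τ t) :
    desB σ m = desB τ m := by
  unfold desB
  congr 1
  apply Finset.filter_congr
  intro t ht
  rw [Finset.mem_range] at ht
  rw [h t (by omega), h (t+1) (by omega)]

lemma SM_ext {n : ℕ} (A B : StepMatrix n) (hq : A.q = B.q) (hp : A.p = B.p)
    (hE : ∀ (i j : ℕ) (hiA : i < A.q) (hjA : j < A.p) (hiB : i < B.q) (hjB : j < B.p),
      A.E ⟨i, hiA⟩ ⟨j, hjA⟩ = B.E ⟨i, hiB⟩ ⟨j, hjB⟩) : A = B := by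
  obtain ⟨qa, pa, hqa, hpa, Ea, sa⟩ := A
  obtain ⟨qb, pb, hqb, hpb, Eb, sb⟩ := B
  dsimp at hq hp hE
  subst hq
  subst hp
  have hEeq : Ea = Eb := by
    funext i j
    exact hE i.val j.val i.isLt j.isLt i.isLt j.isLt
  subst hEeq
  rfl

lemma GFperm (n : ℕ) (hn : 1 ≤ n) (M : StepMatrix n) : Gperm n hn (Fperm M) = M := by
  have hqp := qp_card M
  have hq := M.hq
  have hp := M.hp
  have hσeq : ∀ t, t < n → permσ n (Fperm M) t = wval M t := by
    intro t ht
    rw [permσ, dif_pos ht]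
    have h1 := wval_ne M (m := t) (by omega)
    have : (Fperm M ⟨t, ht⟩).val = wval M t - 1 := rfl
    omega
  have hdeq : ∀ m, m ≤ n - 1 → desB (permσ n (Fperm M)) m = desB (wval M) m := by
    intro m hm
    exact desB_congr (fun t ht => hσeq t (by omega))
  have hD : gD n (permσ n (Fperm M)) = M.q - 1 := by
    have h1 : gD n (permσ n (Fperm M)) = desB (permσ n (Fperm M)) (n-1) := rfl
    rw [h1, hdeq (n-1) le_rfl]
    have h2 : n - 1 = M.q + M.p - 2 := by omega
    rw [h2, desB_last M]
  refine SM_ext _ _ ?_ ?_ ?_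
  · show gq n (permσ n (Fperm M)) = M.q
    rw [gq, hD]; omega
  · show gp n (permσ n (Fperm M)) = M.p
    rw [gp, hD]; omega
  · intro i j hiA hjA hiB hjB
    have hiA' : i < gD n (permσ n (Fperm M)) + 1 := hiA
    have hjA' : j < n - gD n (permσ n (Fperm M)) := hjA
    rw [hD] at hiA' hjA'
    set m' : ℕ := j + (M.q - 1) - i with hm'
    have hm'n : m' ≤ n - 1 := by omega
    have hmIdx : j + gD n (permσ n (Fperm M)) - i = m' := by rw [hD]
    have hrow := pos_row_formula M m' (by omega)
    have hdiag := (pos_spec M (m := m') (by omega)).1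
    have hdm := hdeq m' hm'n
    have hcolLt := (pos M m').2.isLt
    have hrowLt := (pos M m').1.isLt
    show gE n (permσ n (Fperm M)) ⟨i, hiA⟩ ⟨j, hjA⟩ = M.E ⟨i, hiB⟩ ⟨j, hjB⟩
    by_cases hc : desB (permσ n (Fperm M)) m' + i = gD n (permσ n (Fperm M))
    · have hcell : pos M m' = (⟨i, hiB⟩, ⟨j, hjB⟩) := by
        refine Prod.ext (Fin.ext ?_) (Fin.ext ?_) <;> dsimp only <;> omega
      have : gE n (permσ n (Fperm M)) ⟨i, hiA⟩ ⟨j, hjA⟩ = permσ n (Fperm M) m' := by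
        rw [gE_val n (permσ n (Fperm M)) ⟨i, hiA⟩ ⟨j, hjA⟩ (by dsimp only; rw [hmIdx]; omega)]
        dsimp only
        rw [hmIdx]
      rw [this, hσeq m' (by omega), wval, hcell]
    · have hEne : gE n (permσ n (Fperm M)) ⟨i, hiA⟩ ⟨j, hjA⟩ = 0 := by
        unfold gE
        rw [if_neg (by dsimp only; rw [hmIdx]; omega)]
      rw [hEne]
      by_contra hne
      have := pos_unique M (m := m') (by omega) (⟨i, hiB⟩, ⟨j, hjB⟩)
        (by push_cast; omega) (by simpa using Ne.symm hne)
      have hrr : (pos M m').1.val = i := by rw [← this]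
      omega

end SMAux

/-- For every `n ≥ 1`, the set of all step matrices with nonzero entries `{1,…,n}`
(taken over all matrix sizes) is in bijective correspondence with the symmetric group
`S_n`; in particular there are exactly `n!` such step matrices. -/
theorem stepMatrix_equiv_perm (n : ℕ) (hn : 1 ≤ n) :
    Nonempty (StepMatrix n ≃ Equiv.Perm (Fin n)) ∧
    Nat.card (StepMatrix n) = Nat.factorial n := by
  have e : StepMatrix n ≃ Equiv.Perm (Fin n) :=
    { toFun := SMAux.Fperm
      invFun := SMAux.Gperm n hn
      left_inv := fun M => SMAux.GFperm n hn M
      right_inv := fun w => SMAux.FGperm n hn w }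
  refine ⟨⟨e⟩, ?_⟩
  rw [Nat.card_congr e, Nat.card_eq_fintype_card, Fintype.card_perm, Fintype.card_fin]
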